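/- Let (Ω, 𝔉, ℙ) be a probability space, (A, 𝔄) a measurable space, X : Ω → A measurable, and Y : Ω → ℝ integrable. Let f* : A → ℝ be a measurable function such that f*(X) is a version of the conditional expectation E[Y | σ(X)]. Let B ∈ 𝔄 and let C ∈ 𝔉 be an event with X⁻¹(B) ⊆ C and E[Y²·1_C] < ∞. If f̃ : A → ℝ is measurable and minimises f ↦ E[(f(X) − Y)²·1_C] over all measurable functions f : A → ℝ, then f̃·1_B = f*·1_B holds ℙ^X-almost surely, where ℙ^X denotes the law of X. -/

import Mathlib

open MeasureTheory ProbabilityTheory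

open scoped ENNReal

/-- Lemma A.1: conditional expectation as a restricted `L²` projection. Any measurable
minimiser of the squared-error loss restricted to an event `C ⊇ X⁻¹(B)` agrees with the
conditional-expectation factorisation `f*` on `B`, almost surely with respect to the law
of `X`. -/
theorem stmt11 {Ω : Type*} [MeasureSpace Ω] [IsProbabilityMeasure (ℙ : Measure Ω)]
    {A : Type*} [MeasurableSpace A]
    (X : Ω → A) (hX : Measurable X)
    (Y : Ω → ℝ) (hY : Integrable Y ℙ)
    (fstar : A → ℝ) (hfstarMeas : Measurable fstar)
    (hfstar : (fun ω => fstar (X ω)) =ᵐ[(ℙ : Measure Ω)]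
      MeasureTheory.condExp (MeasurableSpace.comap X inferInstance) ℙ Y)
    (B : Set A) (hB : MeasurableSet B)
    (C : Set Ω) (hC : MeasurableSet C)
    (hBC : X ⁻¹' B ⊆ C)
    (hYsq : ∫⁻ ω in C, ENNReal.ofReal ((Y ω) ^ 2) ∂ℙ < ⊤)
    (ftilde : A → ℝ) (hftilde : Measurable ftilde)
    (hmin : ∀ g : A → ℝ, Measurable g →
      ∫⁻ ω in C, ENNReal.ofReal ((ftilde (X ω) - Y ω) ^ 2) ∂ℙ ≤
        ∫⁻ ω in C, ENNReal.ofReal ((g (X ω) - Y ω) ^ 2) ∂ℙ) :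
    ∀ᵐ x ∂(Measure.map X (ℙ : Measure Ω)), x ∈ B → ftilde x = fstar x := by
  have hm : MeasurableSpace.comap X inferInstance ≤ (inferInstance : MeasurableSpace Ω) :=
    hX.comap_le
  set S : Set Ω := X ⁻¹' B with hS_def
  have hS : MeasurableSet S := hX hB
  have hSm : MeasurableSet[MeasurableSpace.comap X inferInstance] S := ⟨B, hB, rfl⟩
  set D : Ω → ℝ := fun ω => ftilde (X ω) - Y ω with hD_def
  have hDsm : AEStronglyMeasurable D ℙ :=
    (hftilde.comp hX).aestronglyMeasurable.sub hY.1
  -- Step A : the loss of `ftilde` is finite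
  have hloss : ∫⁻ ω in C, ENNReal.ofReal (D ω ^ 2) ∂ℙ < ⊤ := by
    refine lt_of_le_of_lt (hmin 0 measurable_const) ?_
    simpa using hYsq
  -- Step B : `D` is square integrable on `C`
  have hD2sm : AEStronglyMeasurable (fun ω => D ω ^ 2) ((ℙ : Measure Ω).restrict C) := by
    simp only [pow_two]; exact hDsm.restrict.mul hDsm.restrict
  have hD2int : IntegrableOn (fun ω => D ω ^ 2) C ℙ := by
    refine ⟨hD2sm, ?_⟩
    rw [hasFiniteIntegral_iff_ofReal (Filter.Eventually.of_forall fun ω => sq_nonneg _)]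
    exact hloss
  have hDL2 : MemLp D 2 ((ℙ : Measure Ω).restrict C) := (memLp_two_iff_integrable_sq hDsm.restrict).mpr hD2int
  have hDL1 : IntegrableOn D C ℙ :=
    memLp_one_iff_integrable.mp (hDL2.mono_exponent (by norm_num))
  have hη : Integrable (S.indicator D) ℙ :=
    ((hDL1.mono_set hBC).integrable_indicator hS)
  -- Step C : variational argument : the set integral of `S.indicator D` vanishes on every
  -- `m`-measurable set.
  have key : ∀ s : Set Ω, MeasurableSet[MeasurableSpace.comap X inferInstance] s → ∫ ω in s, S.indicator D ω ∂ℙ = 0 := by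
    intro s hs
    obtain ⟨T, hT, rfl⟩ := hs
    set T' : Set A := T ∩ B with hT'_def
    have hT' : MeasurableSet T' := hT.inter hB
    set P : Set Ω := X ⁻¹' T' with hP_def
    have hPmeas : MeasurableSet P := hX hT'
    have hPS : P ⊆ S := fun ω hω => hω.2
    have hPC : P ⊆ C := fun ω hω => hBC (hPS hω)
    set I : Ω → ℝ := P.indicator (fun _ => (1 : ℝ)) with hI_def
    have hI01 : ∀ ω, I ω = 0 ∨ I ω = 1 := by
      intro ω
      by_cases h : ω ∈ P <;> simp [hI_def, h]
    have hIint : Integrable I ((ℙ : Measure Ω).restrict C) :=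
      ((integrable_const (1 : ℝ)).indicator hPmeas).restrict
    have hIsm : AEStronglyMeasurable I ((ℙ : Measure Ω).restrict C) := hIint.1
    have hIDint : Integrable (fun ω => I ω * D ω) ((ℙ : Measure Ω).restrict C) := by
      refine hDL1.bdd_mul (c := 1) hIsm ?_
      refine Filter.Eventually.of_forall fun ω => ?_
      rcases hI01 ω with h | h <;> simp [h]
    set a : ℝ := ∫ ω in C, I ω * D ω ∂ℙ with ha_def
    set b : ℝ := ∫ ω in C, I ω ∂ℙ with hb_def
    have hb : 0 ≤ b := by
      refine integral_nonneg fun ω => ?_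
      rcases hI01 ω with h | h <;> simp [h]
    -- the quadratic inequality
    have hq : ∀ t : ℝ, 0 ≤ 2 * t * a + t ^ 2 * b := by
      intro t
      have hgmeas : Measurable (fun x => ftilde x + t * T'.indicator (fun _ => (1 : ℝ)) x) :=
        hftilde.add (measurable_const.mul (measurable_const.indicator hT'))
      have h1 := hmin _ hgmeas
      have hpt : ∀ ω, ftilde (X ω) + t * T'.indicator (fun _ => (1 : ℝ)) (X ω) - Y ω
          = D ω + t * I ω := by
        intro ω
        have : T'.indicator (fun _ => (1 : ℝ)) (X ω) = I ω := by
          by_cases h : ω ∈ P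
          · have hx : X ω ∈ T' := h
            simp [hI_def, h, hx]
          · have hx : X ω ∉ T' := h
            simp [hI_def, h, hx]
        rw [this, hD_def]; ring
      have hexp : ∀ ω, (D ω + t * I ω) ^ 2
          = D ω ^ 2 + (2 * t) * (I ω * D ω) + t ^ 2 * I ω := by
        intro ω
        rcases hI01 ω with h | h <;> rw [h] <;> ring
      -- integrability of the perturbed squared error
      have hsumint : Integrable (fun ω => (D ω + t * I ω) ^ 2) ((ℙ : Measure Ω).restrict C) := by
        have : (fun ω => (D ω + t * I ω) ^ 2)
            = fun ω => D ω ^ 2 + (2 * t) * (I ω * D ω) + t ^ 2 * I ω := funext hexp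
        rw [this]
        exact (hD2int.add (hIDint.const_mul _)).add (hIint.const_mul _)
      -- convert the lintegral inequality into a real one
      have e0 : ENNReal.ofReal (∫ ω in C, D ω ^ 2 ∂ℙ)
          = ∫⁻ ω in C, ENNReal.ofReal (D ω ^ 2) ∂ℙ :=
        ofReal_integral_eq_lintegral_ofReal hD2int
          (Filter.Eventually.of_forall fun ω => sq_nonneg _)
      have et : ENNReal.ofReal (∫ ω in C, (D ω + t * I ω) ^ 2 ∂ℙ)
          = ∫⁻ ω in C, ENNReal.ofReal ((D ω + t * I ω) ^ 2) ∂ℙ :=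
        ofReal_integral_eq_lintegral_ofReal hsumint
          (Filter.Eventually.of_forall fun ω => sq_nonneg _)
      have h1' : ∫⁻ ω in C, ENNReal.ofReal (D ω ^ 2) ∂ℙ
          ≤ ∫⁻ ω in C, ENNReal.ofReal ((D ω + t * I ω) ^ 2) ∂ℙ := by
        refine le_trans (le_of_eq ?_) (le_trans h1 (le_of_eq ?_))
        · exact lintegral_congr fun ω => by rw [hD_def]
        · exact lintegral_congr fun ω => by rw [hpt ω]
      rw [← e0, ← et] at h1'
      have hJ : ∫ ω in C, D ω ^ 2 ∂ℙ ≤ ∫ ω in C, (D ω + t * I ω) ^ 2 ∂ℙ := by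
        have hnn : 0 ≤ ∫ ω in C, (D ω + t * I ω) ^ 2 ∂ℙ :=
          integral_nonneg fun ω => sq_nonneg _
        exact (ENNReal.ofReal_le_ofReal_iff hnn).mp h1'
      have hsplit : ∫ ω in C, (D ω + t * I ω) ^ 2 ∂ℙ
          = ∫ ω in C, D ω ^ 2 ∂ℙ + ((2 * t) * a + t ^ 2 * b) := by
        calc ∫ ω in C, (D ω + t * I ω) ^ 2 ∂ℙ
            = ∫ ω in C, (D ω ^ 2 + (2 * t) * (I ω * D ω) + t ^ 2 * I ω) ∂ℙ :=
              integral_congr_ae (Filter.Eventually.of_forall fun ω => hexp ω)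
          _ = (∫ ω in C, (D ω ^ 2 + (2 * t) * (I ω * D ω)) ∂ℙ)
              + ∫ ω in C, t ^ 2 * I ω ∂ℙ :=
              integral_add (hD2int.add (hIDint.const_mul _)) (hIint.const_mul _)
          _ = (∫ ω in C, D ω ^ 2 ∂ℙ) + (∫ ω in C, (2 * t) * (I ω * D ω) ∂ℙ)
              + ∫ ω in C, t ^ 2 * I ω ∂ℙ := by
              rw [integral_add hD2int (hIDint.const_mul _)]
          _ = ∫ ω in C, D ω ^ 2 ∂ℙ + ((2 * t) * a + t ^ 2 * b) := by
              rw [integral_const_mul, integral_const_mul]; ring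
      rw [hsplit] at hJ
      linarith
    -- a = 0
    have ha0 : a = 0 := by
      have hb1 : (0 : ℝ) < b + 1 := by linarith
      have h := hq (-(a / (b + 1)))
      have h2 : 0 ≤ (2 * (-(a / (b + 1))) * a + (-(a / (b + 1))) ^ 2 * b) * (b + 1) ^ 2 :=
        mul_nonneg h (sq_nonneg _)
      have h3 : (2 * (-(a / (b + 1))) * a + (-(a / (b + 1))) ^ 2 * b) * (b + 1) ^ 2
          = a ^ 2 * (-b - 2) := by
        field_simp
        ring
      rw [h3] at h2
      nlinarith [sq_nonneg a]
    -- identify `a` with the set integral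
    have hIDind : (fun ω => I ω * D ω) = P.indicator D := by
      funext ω
      by_cases h : ω ∈ P <;> simp [hI_def, h]
    have haP : a = ∫ ω in P, D ω ∂ℙ := by
      rw [ha_def, hIDind, setIntegral_indicator hPmeas,
        Set.inter_eq_self_of_subset_right hPC]
    have hsP : ∫ ω in X ⁻¹' T, S.indicator D ω ∂ℙ = ∫ ω in P, D ω ∂ℙ := by
      rw [setIntegral_indicator hS]
      congr 1
    rw [hsP, ← haP, ha0]
  -- Step D : identification with the conditional expectation
  haveI : IsFiniteMeasure ((ℙ : Measure Ω).trim hm) :=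
    ⟨by rw [trim_measurableSet_eq hm MeasurableSet.univ]; exact measure_lt_top _ _⟩
  set f : Ω → ℝ := S.indicator Y with hf_def
  set g : Ω → ℝ := S.indicator (fun ω => ftilde (X ω)) with hg_def
  have hfint : Integrable f ℙ := hY.indicator hS
  have hgf : ∀ ω, g ω = S.indicator D ω + f ω := by
    intro ω
    by_cases h : ω ∈ S <;> simp [hg_def, hf_def, Set.indicator_of_mem,
      Set.indicator_of_notMem, h, hD_def]
  have hgint : Integrable g ℙ := by
    rw [show g = fun ω => S.indicator D ω + f ω from funext hgf]
    exact hη.add hfint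
  have hgm : AEStronglyMeasurable[MeasurableSpace.comap X inferInstance] g ℙ := by
    have hXm : Measurable[MeasurableSpace.comap X inferInstance] X := comap_measurable X
    have : g = fun ω => (B.indicator ftilde) (X ω) := by
      funext ω
      by_cases h : ω ∈ S
      · have hx : X ω ∈ B := h
        simp [hg_def, h, hx]
      · have hx : X ω ∉ B := h
        simp [hg_def, h, hx]
    rw [this]
    exact ((hftilde.indicator hB).comp hXm).stronglyMeasurable.aestronglyMeasurable
  have hg_eq : ∀ s : Set Ω, MeasurableSet[MeasurableSpace.comap X inferInstance] s → ℙ s < ⊤ →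
      ∫ ω in s, g ω ∂ℙ = ∫ ω in s, f ω ∂ℙ := by
    intro s hs _
    rw [show g = fun ω => S.indicator D ω + f ω from funext hgf,
      integral_add hη.integrableOn hfint.integrableOn, key s hs, zero_add]
  have hcond : g =ᵐ[ℙ] ℙ[f|MeasurableSpace.comap X inferInstance] :=
    ae_eq_condExp_of_forall_setIntegral_eq hm hfint
      (fun s _ _ => hgint.integrableOn) hg_eq hgm
  have hind : ℙ[f|MeasurableSpace.comap X inferInstance] =ᵐ[ℙ] S.indicator (ℙ[Y|MeasurableSpace.comap X inferInstance]) := condExp_indicator hY hSm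
  have hstar : S.indicator (fun ω => fstar (X ω)) =ᵐ[ℙ] S.indicator (ℙ[Y|MeasurableSpace.comap X inferInstance]) := by
    filter_upwards [hfstar] with ω h
    by_cases hω : ω ∈ S <;> simp [Set.indicator_of_mem, Set.indicator_of_notMem, hω, h]
  have hfinal : g =ᵐ[ℙ] S.indicator (fun ω => fstar (X ω)) :=
    (hcond.trans hind).trans hstar.symm
  have hae : ∀ᵐ ω ∂ℙ, X ω ∈ B → ftilde (X ω) = fstar (X ω) := by
    filter_upwards [hfinal] with ω h hmem
    have hωS : ω ∈ S := hmem
    simpa [hg_def, Set.indicator_of_mem hωS] using h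
  have hset : MeasurableSet {x : A | x ∈ B → ftilde x = fstar x} := by
    have : {x : A | x ∈ B → ftilde x = fstar x} = Bᶜ ∪ {x | ftilde x = fstar x} := by
      ext x; simp [imp_iff_not_or]
    rw [this]
    exact hB.compl.union (measurableSet_eq_fun hftilde hfstarMeas)
  exact (ae_map_iff hX.aemeasurable hset).mpr hae
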